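/- For α ≠ -1 and s with (α+1)s > 0, the function ρ(s) = (sinh((α+1)s))^{-1/(α+1)} satisfies the differential equation ρ·ρ'' - (α+2)·(ρ')² + (1+α)·ρ² = 0. -/

import Mathlib

open Real

private lemma aux_hasDerivAt_rho (a : ℝ) (ha : a ≠ 0) (s : ℝ) (hs : a * s > 0) :
    HasDerivAt (fun s => Real.sinh (a * s) ^ (-(1 / a)))
      (-(Real.cosh (a * s) * Real.sinh (a * s) ^ (-(1 / a) - 1))) s := by
  have ht : Real.sinh (a * s) > 0 := Real.sinh_pos_iff.mpr hs
  have h1 : HasDerivAt (fun s : ℝ => a * s) a s := by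
    simpa using (hasDerivAt_id s).const_mul a
  have h2 := h1.sinh
  have h3 := h2.rpow_const (p := -(1 / a)) (Or.inl (ne_of_gt ht))
  convert h3 using 1
  field_simp

private lemma aux_hasDerivAt_g (a : ℝ) (ha : a ≠ 0) (s : ℝ) (hs : a * s > 0) :
    HasDerivAt (fun s => -(Real.cosh (a * s) * Real.sinh (a * s) ^ (-(1 / a) - 1)))
      (-(Real.sinh (a * s) * a * Real.sinh (a * s) ^ (-(1 / a) - 1) +
        Real.cosh (a * s) * (Real.cosh (a * s) * a * (-(1 / a) - 1) *
          Real.sinh (a * s) ^ (-(1 / a) - 1 - 1)))) s := by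
  have ht : Real.sinh (a * s) > 0 := Real.sinh_pos_iff.mpr hs
  have h1 : HasDerivAt (fun s : ℝ => a * s) a s := by
    simpa using (hasDerivAt_id s).const_mul a
  have hc := h1.cosh
  have hsin := h1.sinh
  have hr := hsin.rpow_const (p := -(1 / a) - 1) (Or.inl (ne_of_gt ht))
  exact (hc.mul hr).neg

theorem stmt_7 (α : ℝ) (hα : α ≠ -1) (ρ : ℝ → ℝ)
    (hρ : ∀ s : ℝ, ρ s = (Real.sinh ((α + 1) * s)) ^ (-(1 / (α + 1)))) :
    ∀ s : ℝ, (α + 1) * s > 0 →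
      ρ s * deriv (deriv ρ) s - (α + 2) * (deriv ρ s) ^ 2 + (1 + α) * (ρ s) ^ 2 = 0 := by
  intro s hs
  set a := α + 1 with ha
  have ha0 : a ≠ 0 := fun h => hα (by linarith [h.symm ▸ ha])
  set p : ℝ := -(1 / a) with hp
  set g : ℝ → ℝ := fun s => -(Real.cosh (a * s) * Real.sinh (a * s) ^ (p - 1)) with hg
  have hU : IsOpen {s : ℝ | a * s > 0} := isOpen_lt continuous_const (continuous_const.mul continuous_id)
  have hderiv1 : ∀ u ∈ {s : ℝ | a * s > 0}, deriv ρ u = g u := by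
    intro u hu
    have h := aux_hasDerivAt_rho a ha0 u hu
    have hρeq : ρ = fun s => Real.sinh (a * s) ^ (-(1 / a)) := funext hρ
    rw [hρeq]
    exact h.deriv
  -- deriv ρ =ᶠ g near s
  have hev : deriv ρ =ᶠ[nhds s] g :=
    Filter.eventuallyEq_of_mem (hU.mem_nhds hs) hderiv1
  have hderiv2 : deriv (deriv ρ) s = deriv g s := Filter.EventuallyEq.deriv_eq hev
  have hg' := aux_hasDerivAt_g a ha0 s hs
  have hderivg : deriv g s = -(Real.sinh (a * s) * a * Real.sinh (a * s) ^ (p - 1) +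
      Real.cosh (a * s) * (Real.cosh (a * s) * a * (p - 1) *
        Real.sinh (a * s) ^ (p - 1 - 1))) := hg'.deriv
  have ht : Real.sinh (a * s) > 0 := Real.sinh_pos_iff.mpr hs
  set t := Real.sinh (a * s) with htdef
  set c := Real.cosh (a * s) with hcdef
  -- rewrite rpow powers in terms of T := t ^ (p - 2)
  set T : ℝ := t ^ (p - 2) with hT
  have e1 : t ^ p = t ^ 2 * T := by
    rw [hT, ← Real.rpow_natCast t 2, ← Real.rpow_add ht]
    norm_num
  have e2 : t ^ (p - 1) = t * T := by
    rw [hT]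
    nth_rewrite 1 [show p - 1 = 1 + (p - 2) by ring]
    rw [Real.rpow_add ht, Real.rpow_one]
  have e3 : t ^ (p - 1 - 1) = T := by rw [hT, show p - 1 - 1 = p - 2 from by ring]
  have hρs : ρ s = t ^ 2 * T := by rw [hρ s]; exact e1
  have hρ's : deriv ρ s = -(c * (t * T)) := by
    rw [hderiv1 s hs]; show -(c * t ^ (p - 1)) = _; rw [e2]
  have hρ''s : deriv (deriv ρ) s =
      -(t * a * (t * T) + c * (c * a * (p - 1) * T)) := by
    rw [hderiv2, hderivg, e2, e3]
  rw [hρs, hρ's, hρ''s]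
  have hap : a * p = -1 := by rw [hp]; field_simp
  have hα2 : α + 2 = a + 1 := by rw [ha]; ring
  have hα1 : 1 + α = a := by rw [ha]; ring
  rw [hα2, hα1]
  linear_combination (-(t ^ 2 * T ^ 2 * c ^ 2)) * hap
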